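/- Let X be a set, σ : X ≃ X a bijection, and x₀ ∈ X a point with σ(x₀) = x₀. Then the set {f ∈ ℓ²(X;ℂ) : f ∘ σ = f} of fixed vectors of the unitary operator on ℓ²(X;ℂ) induced by σ equals the ℂ-linear span of δ_{x₀} if and only if for every x ∈ X with x ≠ x₀ the orbit {σⁿ(x) : n ∈ ℤ} is infinite. -/

import Mathlib

open scoped ENNReal

/-- ergodicity criterion for group systems, Section 3. For a bijection
`σ` of a set `X` fixing a point `x₀`, the set of fixed vectors of the unitary operator
`f ↦ f ∘ σ` on `ℓ²(X;ℂ)` equals the `ℂ`-linear span of `δ_{x₀}` if and only if the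
orbit `{σⁿ x : n ∈ ℤ}` of every `x ≠ x₀` is infinite. -/
theorem free_joinings_stmt3
    {X : Type*} [DecidableEq X] (σ : X ≃ X) (x₀ : X) (hfix : σ x₀ = x₀) :
    {f : lp (fun _ : X => ℂ) 2 | (fun x => f (σ x)) = (fun x => f x)} =
      ↑(Submodule.span ℂ ({lp.single 2 x₀ (1 : ℂ)} :
        Set (lp (fun _ : X => ℂ) 2))) ↔
    ∀ x : X, x ≠ x₀ → (Set.range fun n : ℤ => (σ ^ n) x).Infinite := by
  have hpow : ∀ (n : ℤ) (y : X), (σ ^ (n + 1)) y = σ ((σ ^ n) y) := by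
    intro n y
    rw [add_comm, zpow_add, zpow_one, Equiv.Perm.mul_apply]
  constructor
  · -- equality of sets → all orbits infinite
    intro h x hx
    by_contra hfin
    rw [Set.not_infinite] at hfin
    set S : Set X := Set.range fun n : ℤ => (σ ^ n) x with hS
    have hxS : x ∈ S := ⟨0, rfl⟩
    have hσS : ∀ y : X, σ y ∈ S ↔ y ∈ S := by
      intro y
      constructor
      · rintro ⟨n, hn⟩
        refine ⟨n - 1, ?_⟩
        show (σ ^ (n - 1)) x = y
        have hn' : (σ ^ n) x = σ y := hn
        have := hpow (n - 1) x
        rw [sub_add_cancel] at this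
        rw [this] at hn'
        exact σ.injective hn'
      · rintro ⟨n, hn⟩
        refine ⟨n + 1, ?_⟩
        show (σ ^ (n + 1)) x = σ y
        have hn' : (σ ^ n) x = y := hn
        rw [hpow n x, hn']
    classical
    -- indicator of the finite orbit
    have hmem : Memℓp (fun y : X => if y ∈ S then (1 : ℂ) else 0) 2 := by
      apply memℓp_gen
      apply summable_of_ne_finset_zero (s := hfin.toFinset)
      intro y hy
      rw [Set.Finite.mem_toFinset] at hy
      simp [hy]
    set g : lp (fun _ : X => ℂ) 2 := ⟨_, hmem⟩ with hg
    have hgmem : g ∈ {f : lp (fun _ : X => ℂ) 2 |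
        (fun x => f (σ x)) = (fun x => f x)} := by
      show (fun y => g (σ y)) = fun y => g y
      funext y
      show (if σ y ∈ S then (1 : ℂ) else 0) = (if y ∈ S then (1 : ℂ) else 0)
      simp [hσS y]
    rw [h] at hgmem
    obtain ⟨c, hc⟩ := Submodule.mem_span_singleton.mp hgmem
    have := congrFun (congrArg (↑· : lp (fun _ : X => ℂ) 2 → ∀ _ : X, ℂ) hc) x
    simp only [lp.coeFn_smul, Pi.smul_apply] at this
    rw [lp.single_apply_ne 2 x₀ _ hx] at this
    have hgx : g x = 1 := by
      show (if x ∈ S then (1 : ℂ) else 0) = 1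
      simp [hxS]
    simp [hxS, hgx] at this
  · -- all orbits infinite → equality of sets
    intro h
    ext f
    simp only [Set.mem_setOf_eq, SetLike.mem_coe, Submodule.mem_span_singleton]
    constructor
    · intro hf
      have hstep : ∀ y : X, f (σ y) = f y := fun y => congrFun hf y
      have horbit : ∀ (n : ℤ) (y : X), f ((σ ^ n) y) = f y := by
        intro n
        induction n using Int.induction_on with
        | zero => intro y; simp
        | succ k ih => intro y; rw [hpow k y, hstep, ih]
        | pred k ih =>
            intro y
            have h1 := hpow (-(k : ℤ) - 1) y
            rw [sub_add_cancel] at h1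
            have : f ((σ ^ (-(k : ℤ) - 1)) y) = f (σ ((σ ^ (-(k : ℤ) - 1)) y)) :=
              (hstep _).symm
            rw [this, ← h1, ih y]
      have hzero : ∀ x : X, x ≠ x₀ → f x = 0 := by
        intro x hx
        by_contra hfx
        have hsum : Summable fun y : X => ‖f y‖ ^ (2 : ℝ≥0∞).toReal :=
          (lp.memℓp f).summable (by norm_num)
        have hcof := hsum.tendsto_cofinite_zero
        have hev : ∀ᶠ y in Filter.cofinite,
            ‖f y‖ ^ (2 : ℝ≥0∞).toReal < ‖f x‖ ^ (2 : ℝ≥0∞).toReal := by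
          apply hcof.eventually_lt_const
          exact Real.rpow_pos_of_pos (norm_pos_iff.mpr hfx) _
        have hfinset : {y : X | ¬ ‖f y‖ ^ (2 : ℝ≥0∞).toReal <
            ‖f x‖ ^ (2 : ℝ≥0∞).toReal}.Finite := hev
        have hsub : (Set.range fun n : ℤ => (σ ^ n) x) ⊆
            {y : X | ¬ ‖f y‖ ^ (2 : ℝ≥0∞).toReal < ‖f x‖ ^ (2 : ℝ≥0∞).toReal} := by
          rintro y ⟨n, rfl⟩
          simp [horbit n x]
        exact h x hx (hfinset.subset hsub)
      refine ⟨f x₀, ?_⟩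
      apply lp.ext
      funext y
      simp only [lp.coeFn_smul, Pi.smul_apply, smul_eq_mul]
      rcases eq_or_ne y x₀ with rfl | hy
      · rw [lp.single_apply_self]; ring
      · rw [lp.single_apply_ne 2 x₀ _ hy, hzero y hy, mul_zero]
    · rintro ⟨c, rfl⟩
      funext y
      simp only [lp.coeFn_smul, Pi.smul_apply, smul_eq_mul]
      have : σ y = x₀ ↔ y = x₀ :=
        ⟨fun h' => σ.injective (h'.trans hfix.symm), fun h' => h' ▸ hfix⟩
      rcases eq_or_ne y x₀ with rfl | hy
      · rw [hfix]
      · rw [lp.single_apply_ne 2 x₀ _ hy, lp.single_apply_ne 2 x₀ _ (by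
          intro h'; exact hy (this.mp h'))]
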